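/- Fix ε ∈ (0,1] and set λ_t = ε·t^{-3/4} for t ≥ 1. Given a sequence (j_t)_{t≥1} with j_t ∈ {0,1}, define sequences (x_t)_{t≥1} and (α_t)_{t≥1} recursively by: α_t = ∏_{s=1}^{t-1}(1 − x_s) (so α_1 = 1); R¹_{t-1} = max(0, ∑_{s=1}^{t-1} α_s x_s (1 − 2j_s)) and R²_{t-1} = max(0, ∑_{s=1}^{t-1} α_s (λ_s^{-1} x_s − 1)(1 − 2j_s)); and x_t = 0 if (R¹_{t-1}, R²_{t-1}) = (0,0), and x_t = λ_t²·R²_{t-1} / (R¹_{t-1} + λ_t·R²_{t-1}) otherwise. For t ≥ 1 let r_t = α_t(1−2j_t)·(x_t, λ_t^{-1}x_t − 1) ∈ ℝ² and ‖u‖_(t)² = (u^(1))² + λ_t²·(u^(2))². Then for every t ≥ 1: ∑_{s=1}^t ‖r_s‖_(s)² ≤ 9ε². -/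

import Mathlib

open Finset

lemma aux_step (t : ℕ) (ht : 1 ≤ t) :
    (((t+1 : ℕ):ℝ) * Real.sqrt (t+1))⁻¹ ≤ 2 / Real.sqrt t - 2 / Real.sqrt (t+1) := by
  set a := Real.sqrt t with ha
  set b := Real.sqrt (t+1) with hb
  have hta : (1:ℝ) ≤ (t:ℝ) := by exact_mod_cast ht
  have ha2 : a ^ 2 = t := Real.sq_sqrt (by linarith)
  have hb2 : b ^ 2 = (t:ℝ) + 1 := by
    rw [hb]; rw [Real.sq_sqrt (by linarith)]
  have hapos : 0 < a := Real.sqrt_pos.mpr (by linarith)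
  have hbpos : 0 < b := Real.sqrt_pos.mpr (by positivity)
  have hab : a ≤ b := Real.sqrt_le_sqrt (by linarith)
  have hcast : ((t+1:ℕ):ℝ) = b ^ 2 := by push_cast; rw [hb2]
  rw [hcast]
  rw [div_sub_div _ _ (ne_of_gt hapos) (ne_of_gt hbpos), inv_eq_one_div,
    div_le_div_iff₀ (by positivity) (by positivity)]
  have hba : b - a = 1 / (a + b) := by
    rw [eq_div_iff (by positivity)]; nlinarith
  have key : a * (a + b) ≤ 2 * b ^ 2 := by nlinarith
  nlinarith [mul_pos hapos hbpos, mul_pos (mul_pos hbpos hbpos) hbpos,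
    mul_le_mul_of_nonneg_left key (mul_nonneg (mul_nonneg hbpos.le hbpos.le) hbpos.le),
    mul_pos hapos (add_pos hapos hbpos)]

lemma aux_sum : ∀ t : ℕ, 1 ≤ t →
    ∑ s ∈ Icc 1 t, ((s:ℝ) * Real.sqrt s)⁻¹ ≤ 3 - 2 / Real.sqrt t := by
  intro t ht
  induction t with
  | zero => omega
  | succ n ih =>
    rcases Nat.eq_or_lt_of_le ht with h | h
    · rw [← h]; norm_num
    · have hn : 1 ≤ n := by omega
      rw [Finset.sum_Icc_succ_top (by omega)]
      have := aux_step n hn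
      have := ih hn
      push_cast at *
      linarith

lemma aux_rpow (s : ℕ) (hs : 1 ≤ s) :
    ((s:ℝ) ^ (-(3 : ℝ) / 4)) ^ 2 = ((s:ℝ) * Real.sqrt s)⁻¹ := by
  have hs0 : (0:ℝ) < (s:ℝ) := by exact_mod_cast hs
  rw [← Real.rpow_natCast ((s:ℝ) ^ (-(3 : ℝ) / 4)) 2, ← Real.rpow_mul hs0.le]
  have h32 : (-(3 : ℝ) / 4) * (2:ℕ) = -(3/2 : ℝ) := by push_cast; ring
  rw [h32, Real.rpow_neg hs0.le]
  congr 1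
  have : (3/2 : ℝ) = 1 + 1/2 := by norm_num
  rw [this, Real.rpow_add hs0, Real.rpow_one, ← Real.sqrt_eq_rpow]

/-- Bound on the cumulative squared norms of the outcome vectors `r_t = α_t(1−2j_t)·(x_t, λ_t⁻¹x_t − 1)` for the time-dependent norms `‖u‖_(t)² = (u¹)² + λ_t²(u²)²`: `∑_{s=1}^t ‖r_s‖_(s)² ≤ 9ε²`. -/
theorem big_match_outcome_norms_bound
    (ε : ℝ) (hε : ε ∈ Set.Ioc (0 : ℝ) 1)
    (lam : ℕ → ℝ) (hlam : ∀ t : ℕ, 1 ≤ t → lam t = ε * (t : ℝ) ^ (-(3 : ℝ) / 4))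
    (j : ℕ → ℝ) (hj : ∀ t, j t = 0 ∨ j t = 1)
    (x α : ℕ → ℝ)
    (hα : ∀ t, α t = ∏ s ∈ Finset.Icc 1 (t - 1), (1 - x s))
    (R1 R2 : ℕ → ℝ)
    (hR1 : ∀ t, R1 t = max 0 (∑ s ∈ Finset.Icc 1 t, α s * x s * (1 - 2 * j s)))
    (hR2 : ∀ t, R2 t =
      max 0 (∑ s ∈ Finset.Icc 1 t, α s * ((lam s)⁻¹ * x s - 1) * (1 - 2 * j s)))
    (hx : ∀ t : ℕ, 1 ≤ t →
      x t = if R1 (t - 1) = 0 ∧ R2 (t - 1) = 0 then 0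
        else lam t ^ 2 * R2 (t - 1) / (R1 (t - 1) + lam t * R2 (t - 1))) :
    ∀ t : ℕ, 1 ≤ t →
      ∑ s ∈ Finset.Icc 1 t,
          ((α s * (1 - 2 * j s) * x s) ^ 2 +
            lam s ^ 2 * (α s * (1 - 2 * j s) * ((lam s)⁻¹ * x s - 1)) ^ 2) ≤
        9 * ε ^ 2 := by
  obtain ⟨hεpos, hε1⟩ := hε
  have hlampos : ∀ s : ℕ, 1 ≤ s → 0 < lam s := by
    intro s hs
    have hs0 : (0:ℝ) < (s:ℝ) := by exact_mod_cast hs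
    rw [hlam s hs]; positivity
  have hlamle1 : ∀ s : ℕ, 1 ≤ s → lam s ≤ 1 := by
    intro s hs
    have hs1 : (1:ℝ) ≤ (s:ℝ) := by exact_mod_cast hs
    rw [hlam s hs]
    calc ε * (s:ℝ) ^ (-(3 : ℝ) / 4) ≤ 1 * 1 := by
          apply mul_le_mul hε1 (Real.rpow_le_one_of_one_le_of_nonpos hs1 (by norm_num))
            (Real.rpow_nonneg (by positivity) _) one_pos.le
      _ = 1 := by ring
  have hxb : ∀ s : ℕ, 1 ≤ s → 0 ≤ x s ∧ x s ≤ lam s := by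
    intro s hs
    have hl := hlampos s hs
    rw [hx s hs]
    split_ifs with h
    · exact ⟨le_refl 0, hl.le⟩
    · have h1 : 0 ≤ R1 (s-1) := by rw [hR1]; exact le_max_left _ _
      have h2 : 0 ≤ R2 (s-1) := by rw [hR2]; exact le_max_left _ _
      have hd : 0 < R1 (s-1) + lam s * R2 (s-1) := by
        rcases h1.lt_or_eq with h1' | h1'
        · have : 0 ≤ lam s * R2 (s-1) := mul_nonneg hl.le h2
          linarith
        · rcases h2.lt_or_eq with h2' | h2'
          · have : 0 < lam s * R2 (s-1) := mul_pos hl h2'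
            linarith
          · exact absurd ⟨h1'.symm, h2'.symm⟩ h
      constructor
      · positivity
      · rw [div_le_iff₀ hd]
        nlinarith [mul_nonneg (mul_nonneg hl.le hl.le) h2, mul_nonneg hl.le h1]
  have hαb : ∀ s : ℕ, 0 ≤ α s ∧ α s ≤ 1 := by
    intro s
    rw [hα]
    constructor
    · apply Finset.prod_nonneg
      intro u hu
      have hu1 : 1 ≤ u := (Finset.mem_Icc.mp hu).1
      have := hxb u hu1
      have := hlamle1 u hu1
      linarith [this, (hxb u hu1).2]
    · apply Finset.prod_le_one
      · intro u hu
        have hu1 : 1 ≤ u := (Finset.mem_Icc.mp hu).1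
        linarith [(hxb u hu1).2, hlamle1 u hu1]
      · intro u hu
        have hu1 : 1 ≤ u := (Finset.mem_Icc.mp hu).1
        linarith [(hxb u hu1).1]
  intro t ht
  have hterm : ∀ s ∈ Icc 1 t,
      (α s * (1 - 2 * j s) * x s) ^ 2 +
        lam s ^ 2 * (α s * (1 - 2 * j s) * ((lam s)⁻¹ * x s - 1)) ^ 2 ≤
      2 * (ε ^ 2 * ((s:ℝ) * Real.sqrt s)⁻¹) := by
    intro s hsmem
    have hs : 1 ≤ s := (Finset.mem_Icc.mp hsmem).1
    have hl := hlampos s hs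
    have hkey : lam s * ((lam s)⁻¹ * x s - 1) = x s - lam s := by
      field_simp
    have hsq : lam s ^ 2 * (α s * (1 - 2 * j s) * ((lam s)⁻¹ * x s - 1)) ^ 2
        = (α s * (1 - 2 * j s)) ^ 2 * (x s - lam s) ^ 2 := by
      rw [← hkey]; ring
    have hjsq : (1 - 2 * j s) ^ 2 = 1 := by
      rcases hj s with h | h <;> rw [h] <;> ring
    have hα0 := (hαb s).1
    have hα1 := (hαb s).2
    have hx0 := (hxb s hs).1
    have hx1 := (hxb s hs).2
    have hbound : (α s * (1 - 2 * j s) * x s) ^ 2 +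
        lam s ^ 2 * (α s * (1 - 2 * j s) * ((lam s)⁻¹ * x s - 1)) ^ 2 ≤ 2 * lam s ^ 2 := by
      rw [hsq]
      have e1 : (α s * (1 - 2 * j s) * x s) ^ 2 = α s ^ 2 * ((1 - 2*j s)^2 * x s ^ 2) := by ring
      have e2 : (α s * (1 - 2 * j s)) ^ 2 * (x s - lam s) ^ 2
          = α s ^ 2 * ((1 - 2*j s)^2 * (x s - lam s) ^ 2) := by ring
      rw [e1, e2, hjsq]
      have hxs : x s ^ 2 ≤ lam s ^ 2 := by nlinarith
      have hxl : (x s - lam s) ^ 2 ≤ lam s ^ 2 := by nlinarith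
      have hα2 : α s ^ 2 ≤ 1 := by nlinarith
      nlinarith [sq_nonneg (α s), sq_nonneg (x s), sq_nonneg (x s - lam s), sq_nonneg (lam s)]
    have hlamsq : lam s ^ 2 = ε ^ 2 * ((s:ℝ) * Real.sqrt s)⁻¹ := by
      rw [hlam s hs, mul_pow, aux_rpow s hs]
    linarith [hbound, hlamsq ▸ hbound]
  calc ∑ s ∈ Icc 1 t,
        ((α s * (1 - 2 * j s) * x s) ^ 2 +
          lam s ^ 2 * (α s * (1 - 2 * j s) * ((lam s)⁻¹ * x s - 1)) ^ 2)
      ≤ ∑ s ∈ Icc 1 t, 2 * (ε ^ 2 * ((s:ℝ) * Real.sqrt s)⁻¹) :=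
        Finset.sum_le_sum hterm
    _ = 2 * ε ^ 2 * ∑ s ∈ Icc 1 t, ((s:ℝ) * Real.sqrt s)⁻¹ := by
        rw [Finset.mul_sum]; apply Finset.sum_congr rfl; intro s _; ring
    _ ≤ 2 * ε ^ 2 * 3 := by
        have h1 := aux_sum t ht
        have h2 : 0 < Real.sqrt t := Real.sqrt_pos.mpr (by exact_mod_cast ht)
        have h3 : (0:ℝ) < 2 / Real.sqrt t := by positivity
        apply mul_le_mul_of_nonneg_left _ (by positivity)
        linarith
    _ ≤ 9 * ε ^ 2 := by nlinarith [sq_nonneg ε]
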